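/- Fix 0 < ρ < 1 and a Möbius transformation f with f(𝔻₁) ⊆ 𝔻_ρ. Define operators on bounded holomorphic functions h on 𝔻_ρ: (L h)(w) = (1/(2πi)) ∮_{|z|=ρ} h(f(w/z))/(1−z) dz and (R_m h)(w) = (1/(2πi)) ∮_{|z|=ρ} z^{m-1} h(f(w/z))/(1−z) dz for m ≥ 1. Then, with ‖h‖_osc = sup_{u,v∈𝔻_ρ}|h(u)−h(v)| and K(ρ) = (1/(2π)) ∮_{|z|=ρ}|dz|/|1−z|: (a) ‖L h‖_osc ≤ ‖h‖_osc; (b) ‖R_m h‖_osc ≤ ρ^{m-1} K(ρ) ‖h‖_osc; (c) L h(0) = R_m h(0) = 0. -/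

import Mathlib

open Complex Metric

/-- The operator `L`: `(L h)(w) = (1/(2πi)) ∮_{|z|=ρ} h(f(w/z))/(1−z) dz`. -/
noncomputable def Lop (f : ℂ → ℂ) (ρ : ℝ) (h : ℂ → ℂ) (w : ℂ) : ℂ :=
  (2 * Real.pi * I)⁻¹ * ∮ z in C(0, ρ), (1 - z)⁻¹ * h (f (w / z))

/-- The operator `R_m`: `(R_m h)(w) = (1/(2πi)) ∮_{|z|=ρ} z^{m-1} h(f(w/z))/(1−z) dz`. -/
noncomputable def Rop (f : ℂ → ℂ) (ρ : ℝ) (m : ℕ) (h : ℂ → ℂ) (w : ℂ) : ℂ :=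
  (2 * Real.pi * I)⁻¹ * ∮ z in C(0, ρ), z ^ (m - 1) * (1 - z)⁻¹ * h (f (w / z))


/-- Cauchy theorem for the basic disk integrand: holomorphic integrands integrate to zero. -/
lemma osc_cauchy_zero {ρ : ℝ} (hρ0 : 0 < ρ) (hρ1 : ρ < 1) (F : ℂ → ℂ)
    (hF : DifferentiableOn ℂ F (ball (0:ℂ) 1)) :
    (∮ z in C(0, ρ), F z) = 0 := by
  refine circleIntegral_eq_zero_of_differentiable_on_off_countable hρ0.le Set.countable_empty
    (hF.continuousOn.mono ?_) (fun z hz => hF.differentiableAt (isOpen_ball.mem_nhds ?_))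
  · intro z hz
    simp only [mem_closedBall, dist_zero_right] at hz
    simpa [mem_ball, dist_zero_right] using lt_of_le_of_lt hz hρ1
  · rcases hz with ⟨hz, -⟩
    simp only [mem_ball, dist_zero_right] at hz ⊢
    exact lt_trans hz hρ1

lemma osc_key {g : ℂ → ℂ} (hg : DifferentiableOn ℂ g (ball (0:ℂ) 1))
    {ρ : ℝ} (hρ0 : 0 < ρ) (hρ1 : ρ < 1) {w : ℂ} (hw : ‖w‖ < ρ) :
    (∮ z in C(0, ρ), (1 - z)⁻¹ * g (w / z)) = 2 * Real.pi * I * (g w - g 0) := by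
  have hw1 : w ∈ ball (0:ℂ) 1 := by
    simp only [mem_ball, dist_zero_right]; exact hw.trans hρ1
  set D : ℂ → ℂ := dslope g w with hD_def
  have hD : DifferentiableOn ℂ D (ball (0:ℂ) 1) :=
    (Complex.differentiableOn_dslope (isOpen_ball.mem_nhds hw1)).mpr hg
  set Ψ : ℂ → ℂ := fun z => w * z⁻¹ * D (w / z) with hΨ_def
  have hmem : ∀ z : ℂ, ρ ≤ ‖z‖ → w / z ∈ ball (0:ℂ) 1 := by
    intro z hz
    simp only [mem_ball, dist_zero_right, norm_div]
    rw [div_lt_one (lt_of_lt_of_le hρ0 hz)]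
    exact hw.trans_le hz
  have hΨdiff : ∀ z : ℂ, ρ ≤ ‖z‖ → DifferentiableAt ℂ Ψ z := by
    intro z hz
    have hz0 : z ≠ 0 := by
      intro h; rw [h, norm_zero] at hz; exact absurd hz (not_le.2 hρ0)
    have h1 : DifferentiableAt ℂ (fun z : ℂ => w / z) z :=
      (differentiableAt_const w).div differentiableAt_id hz0
    have h2 : DifferentiableAt ℂ D (w / z) :=
      hD.differentiableAt (isOpen_ball.mem_nhds (hmem z hz))
    exact ((differentiableAt_const w).mul (differentiableAt_inv hz0)).mul (h2.comp z h1)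
  have hannulus : ∀ R : ℝ, ρ ≤ R → (∮ z in C(0, R), Ψ z) = ∮ z in C(0, ρ), Ψ z := by
    intro R hR
    refine circleIntegral_eq_of_differentiable_on_annulus_off_countable hρ0 hR
      Set.countable_empty (fun z hz => ?_) (fun z hz => ?_)
    · refine (hΨdiff z ?_).continuousAt.continuousWithinAt
      rcases hz with ⟨-, hz⟩
      simpa [mem_ball, dist_zero_right, not_lt] using hz
    · refine hΨdiff z ?_
      rcases hz with ⟨⟨-, hz⟩, -⟩
      simp only [mem_closedBall, dist_zero_right, not_le] at hz
      exact hz.le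
  have hcontD : ContinuousAt D 0 :=
    (hD.differentiableAt (isOpen_ball.mem_nhds (by simp))).continuousAt
  have hval : (∮ z in C(0, ρ), Ψ z) = 2 * Real.pi * I * (w * D 0) := by
    rw [← sub_eq_zero, ← norm_le_zero_iff]
    refine le_of_forall_pos_le_add (fun ε hε => ?_)
    rw [zero_add]
    set ε' : ℝ := ε / (2 * Real.pi * ‖w‖ + 1) with hε'
    have hden : (0:ℝ) < 2 * Real.pi * ‖w‖ + 1 := by positivity
    have hε'0 : 0 < ε' := div_pos hε hden
    obtain ⟨δ, hδ0, hδ⟩ := Metric.continuousAt_iff.1 hcontD ε' hε'0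
    set R : ℝ := max ρ (‖w‖ / δ + 1) with hR_def
    have hRρ : ρ ≤ R := le_max_left _ _
    have hR0 : 0 < R := lt_of_lt_of_le hρ0 hRρ
    have hRδ : ‖w‖ / R < δ := by
      rw [div_lt_iff₀ hR0]
      have h1 : ‖w‖ / δ + 1 ≤ R := le_max_right _ _
      have h2 : ‖w‖ / δ < R := lt_of_lt_of_le (by linarith) h1
      calc ‖w‖ = δ * (‖w‖ / δ) := by field_simp
        _ < δ * R := mul_lt_mul_of_pos_left h2 hδ0
    have hΨcont : ContinuousOn Ψ (sphere (0:ℂ) R) := by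
      intro z hz
      have hz' : ρ ≤ ‖z‖ := by
        rw [mem_sphere_iff_norm, sub_zero] at hz; rw [hz]; exact hRρ
      exact (hΨdiff z hz').continuousAt.continuousWithinAt
    have hint1 : CircleIntegrable Ψ 0 R := hΨcont.circleIntegrable hR0.le
    have hint2 : CircleIntegrable (fun z : ℂ => (w * D 0) • (z - 0)⁻¹) 0 R := by
      refine ContinuousOn.circleIntegrable hR0.le ?_
      refine (continuousOn_const (c := (w * D 0 : ℂ))).smul (ContinuousOn.inv₀ (f := fun z : ℂ => z - 0) (s := sphere (0:ℂ) R) (by fun_prop) ?_)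
      intro z hz h
      rw [mem_sphere_iff_norm, sub_zero] at hz
      rw [sub_zero] at h
      rw [h, norm_zero] at hz
      exact hR0.ne' hz.symm
    have hc : (∮ z in C(0, R), (w * D 0) • (z - 0)⁻¹) = 2 * Real.pi * I * (w * D 0) := by
      rw [circleIntegral.integral_smul, circleIntegral.integral_sub_inv_of_mem_ball
        (mem_ball_self hR0)]
      simp only [smul_eq_mul]; ring
    rw [← hannulus R hRρ, ← hc, ← circleIntegral.integral_sub hint1 hint2]
    have hbound : ∀ z ∈ sphere (0:ℂ) R, ‖Ψ z - (w * D 0) • (z - 0)⁻¹‖ ≤ ‖w‖ / R * ε' := by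
      intro z hz
      rw [mem_sphere_iff_norm, sub_zero] at hz
      have hz0 : z ≠ 0 := by
        intro h; rw [h, norm_zero] at hz; exact hR0.ne' hz.symm
      have heq : Ψ z - (w * D 0) • (z - 0)⁻¹ = w * z⁻¹ * (D (w / z) - D 0) := by
        simp only [hΨ_def, sub_zero, smul_eq_mul]; ring
      rw [heq]
      have hdist : dist (w / z) 0 < δ := by
        rw [dist_zero_right, norm_div, hz]; exact hRδ
      have hDd : ‖D (w / z) - D 0‖ ≤ ε' := by
        rw [← dist_eq_norm]; exact (hδ hdist).le
      calc ‖w * z⁻¹ * (D (w / z) - D 0)‖ = ‖w‖ / R * ‖D (w / z) - D 0‖ := by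
            rw [norm_mul, norm_mul, norm_inv, hz]; ring
        _ ≤ ‖w‖ / R * ε' := mul_le_mul_of_nonneg_left hDd (by positivity)
    refine (circleIntegral.norm_integral_le_of_norm_le_const hR0.le hbound).trans ?_
    have heq2 : 2 * Real.pi * R * (‖w‖ / R * ε') = 2 * Real.pi * ‖w‖ * ε' := by
      field_simp
    rw [heq2, hε', ← mul_div_assoc, div_le_iff₀ hden]
    nlinarith [Real.pi_pos, norm_nonneg w, hε.le]
  -- relate the original integrand to Ψ on the circle of radius ρ
  have hsphere : ∀ z ∈ sphere (0:ℂ) ρ,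
      (1 - z)⁻¹ * g (w / z) - g w * (1 - z)⁻¹ = Ψ z := by
    intro z hz
    rw [mem_sphere_iff_norm, sub_zero] at hz
    have hz0 : z ≠ 0 := by
      intro h; rw [h, norm_zero] at hz; exact hρ0.ne' hz.symm
    have hz1 : (1:ℂ) - z ≠ 0 := by
      intro h
      have hz1' : z = 1 := by linear_combination -h
      rw [hz1', norm_one] at hz
      exact absurd hz.symm (ne_of_lt hρ1)
    by_cases hw0 : w = 0
    · subst hw0
      simp only [hΨ_def, zero_div, zero_mul]
      ring
    · have hwz : w / z ≠ w := by
        intro h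
        rw [div_eq_iff hz0] at h
        have hz1' : z = 1 := mul_left_cancel₀ hw0 (by rw [mul_one]; exact h.symm)
        rw [hz1', norm_one] at hz
        exact absurd hz.symm (ne_of_lt hρ1)
      simp only [hΨ_def, hD_def, dslope_of_ne g hwz, slope_def_field]
      have hrep : w / z - w = w * z⁻¹ * (1 - z) := by
        field_simp
      rw [div_eq_mul_inv (g (w / z) - g w), hrep, mul_inv]
      have hwzne : w * z⁻¹ ≠ 0 := mul_ne_zero hw0 (inv_ne_zero hz0)
      rw [show w * z⁻¹ * ((g (w / z) - g w) * ((w * z⁻¹)⁻¹ * (1 - z)⁻¹))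
            = (w * z⁻¹ * (w * z⁻¹)⁻¹) * ((g (w / z) - g w) * (1 - z)⁻¹) from by ring,
        mul_inv_cancel₀ hwzne, one_mul]
      ring
  -- integrability on the circle of radius ρ
  have hφcont : ContinuousOn (fun z : ℂ => (1 - z)⁻¹ * g (w / z)) (sphere (0:ℂ) ρ) := by
    intro z hz
    rw [mem_sphere_iff_norm, sub_zero] at hz
    have hz0 : z ≠ 0 := by
      intro h; rw [h, norm_zero] at hz; exact hρ0.ne' hz.symm
    have hz1 : (1:ℂ) - z ≠ 0 := by
      intro h
      have hz1' : z = 1 := by linear_combination -h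
      rw [hz1', norm_one] at hz
      exact absurd hz.symm (ne_of_lt hρ1)
    have h1 : ContinuousAt (fun z : ℂ => (1 - z)⁻¹) z :=
      ((continuous_const.sub continuous_id).continuousAt).inv₀ hz1
    have h2 : ContinuousAt g (w / z) :=
      (hg.differentiableAt (isOpen_ball.mem_nhds (hmem z hz.ge))).continuousAt
    exact (h1.mul (h2.comp (continuousAt_const.div continuousAt_id hz0))).continuousWithinAt
  have hφint : CircleIntegrable (fun z : ℂ => (1 - z)⁻¹ * g (w / z)) 0 ρ :=
    hφcont.circleIntegrable hρ0.le
  have hcint : CircleIntegrable (fun z : ℂ => g w * (1 - z)⁻¹) 0 ρ := by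
    refine ContinuousOn.circleIntegrable hρ0.le ?_
    refine continuousOn_const.mul (ContinuousOn.inv₀ (by fun_prop) ?_)
    intro z hz h
    rw [mem_sphere_iff_norm, sub_zero] at hz
    have hz1' : z = 1 := by linear_combination -h
    rw [hz1', norm_one] at hz
    exact absurd hz.symm (ne_of_lt hρ1)
  have hczero : (∮ z in C(0, ρ), g w * (1 - z)⁻¹) = 0 := by
    refine osc_cauchy_zero hρ0 hρ1 _ ?_
    refine DifferentiableOn.const_mul (DifferentiableOn.inv ?_ ?_) _
    · exact (differentiable_const (1:ℂ)).differentiableOn.sub differentiable_id.differentiableOn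
    · intro z hz h
      simp only [mem_ball, dist_zero_right] at hz
      have hz1' : z = 1 := by linear_combination -h
      rw [hz1', norm_one] at hz
      exact lt_irrefl 1 hz
  have hΨval : (∮ z in C(0, ρ), Ψ z)
      = (∮ z in C(0, ρ), (1 - z)⁻¹ * g (w / z)) := by
    rw [← circleIntegral.integral_congr hρ0.le hsphere,
      circleIntegral.integral_sub hφint hcint, hczero, sub_zero]
  rw [← hΨval, hval]
  congr 1
  by_cases hw0 : w = 0
  · simp [hw0]
  · have h0w : (0:ℂ) ≠ w := fun h => hw0 h.symm
    rw [hD_def, dslope_of_ne g h0w, slope_def_field]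
    field_simp
    ring

/-- oscillation bounds for the integral operators `L` and `R_m` attached
to a Möbius transformation `f` with `f(𝔻₁) ⊆ 𝔻_ρ`, acting on a bounded-oscillation
holomorphic function `h` on `𝔻_ρ`, where
`K(ρ) = (1/(2π)) ∫₀^{2π} ρ/|1−ρe^{iθ}| dθ`:
(a) `‖Lh‖_osc ≤ ‖h‖_osc`; (b) `‖R_m h‖_osc ≤ ρ^{m-1} K(ρ) ‖h‖_osc`;
(c) `Lh(0) = R_m h(0) = 0`. -/
theorem integral_operator_oscillation_bounds
    (a b c d : ℂ) (hdet : a * d - b * c ≠ 0)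
    (ρ : ℝ) (hρ0 : 0 < ρ) (hρ1 : ρ < 1)
    (hpole : ∀ z : ℂ, ‖z‖ < 1 → c * z + d ≠ 0)
    (hmap : ∀ z : ℂ, ‖z‖ < 1 → ‖(a * z + b) / (c * z + d)‖ < ρ)
    (h : ℂ → ℂ) (hh : DifferentiableOn ℂ h (ball (0 : ℂ) ρ))
    (O : ℝ) (hosc : ∀ u ∈ ball (0 : ℂ) ρ, ∀ v ∈ ball (0 : ℂ) ρ, ‖h u - h v‖ ≤ O)
    (m : ℕ) (hm : 1 ≤ m) :
    (∀ u ∈ ball (0 : ℂ) ρ, ∀ v ∈ ball (0 : ℂ) ρ,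
      ‖Lop (fun z => (a * z + b) / (c * z + d)) ρ h u -
       Lop (fun z => (a * z + b) / (c * z + d)) ρ h v‖ ≤ O) ∧
    (∀ u ∈ ball (0 : ℂ) ρ, ∀ v ∈ ball (0 : ℂ) ρ,
      ‖Rop (fun z => (a * z + b) / (c * z + d)) ρ m h u -
       Rop (fun z => (a * z + b) / (c * z + d)) ρ m h v‖ ≤
      ρ ^ (m - 1) *
        ((1 / (2 * Real.pi)) *
          ∫ θ in (0 : ℝ)..(2 * Real.pi), ρ / ‖(1 : ℂ) - (ρ : ℂ) * Complex.exp (θ * I)‖) *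
        O) ∧
    (Lop (fun z => (a * z + b) / (c * z + d)) ρ h 0 = 0 ∧
     Rop (fun z => (a * z + b) / (c * z + d)) ρ m h 0 = 0) := by
  have h2πI : (2 * Real.pi * I : ℂ) ≠ 0 := by
    simp [Real.pi_ne_zero, I_ne_zero]
  -- the composition g = h ∘ f
  set g : ℂ → ℂ := fun u => h ((a * u + b) / (c * u + d)) with hg_def
  have hfd : DifferentiableOn ℂ (fun z : ℂ => (a * z + b) / (c * z + d)) (ball (0:ℂ) 1) := by
    intro z hz
    rw [mem_ball, dist_zero_right] at hz
    exact (((differentiable_id.const_mul a).add_const b z).div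
      (((differentiable_id.const_mul c).add_const d) z) (hpole z hz)).differentiableWithinAt
  have hmaps : ∀ z : ℂ, z ∈ ball (0:ℂ) 1 → (a * z + b) / (c * z + d) ∈ ball (0:ℂ) ρ := by
    intro z hz
    rw [mem_ball, dist_zero_right] at hz ⊢
    exact hmap z hz
  have hg : DifferentiableOn ℂ g (ball (0:ℂ) 1) := hh.comp hfd hmaps
  -- L is a coboundary
  have hLop : ∀ w : ℂ, ‖w‖ < ρ →
      Lop (fun z => (a * z + b) / (c * z + d)) ρ h w = g w - g 0 := by
    intro w hw
    show (2 * Real.pi * I : ℂ)⁻¹ * (∮ z in C(0, ρ), (1 - z)⁻¹ * g (w / z)) = g w - g 0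
    rw [osc_key hg hρ0 hρ1 hw, ← mul_assoc, inv_mul_cancel₀ h2πI, one_mul]
  -- part (a)
  refine ⟨?_, ?_, ?_, ?_⟩
  · intro u hu v hv
    rw [mem_ball, dist_zero_right] at hu hv
    rw [hLop u hu, hLop v hv]
    have h1 : g u - g 0 - (g v - g 0) = g u - g v := by ring
    rw [h1]
    exact hosc _ (hmaps u (by rw [mem_ball, dist_zero_right]; exact hu.trans hρ1))
      _ (hmaps v (by rw [mem_ball, dist_zero_right]; exact hv.trans hρ1))
  -- part (b)
  · intro u hu v hv
    rw [mem_ball, dist_zero_right] at hu hv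
    -- continuity of the integrands on the circle
    have hcontφ : ∀ w : ℂ, ‖w‖ < ρ →
        ContinuousOn (fun z : ℂ => z ^ (m - 1) * (1 - z)⁻¹ * g (w / z)) (sphere (0:ℂ) ρ) := by
      intro w hw z hz
      rw [mem_sphere_iff_norm, sub_zero] at hz
      have hz0 : z ≠ 0 := by
        intro hze; rw [hze, norm_zero] at hz; exact hρ0.ne' hz.symm
      have hz1 : (1:ℂ) - z ≠ 0 := by
        intro hze
        have : z = 1 := by linear_combination -hze
        rw [this, norm_one] at hz
        exact absurd hz.symm (ne_of_lt hρ1)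
      have hwz : w / z ∈ ball (0:ℂ) 1 := by
        rw [mem_ball, dist_zero_right, norm_div, hz, div_lt_one hρ0]
        exact hw
      have h1 : ContinuousAt (fun z : ℂ => z ^ (m - 1) * (1 - z)⁻¹) z :=
        (continuousAt_pow _ _).mul (((continuous_const.sub continuous_id).continuousAt).inv₀ hz1)
      have h2 : ContinuousAt g (w / z) :=
        (hg.differentiableAt (isOpen_ball.mem_nhds hwz)).continuousAt
      exact (h1.mul (h2.comp (continuousAt_const.div continuousAt_id hz0))).continuousWithinAt
    have hintu : CircleIntegrable (fun z : ℂ => z ^ (m - 1) * (1 - z)⁻¹ * g (u / z)) 0 ρ :=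
      (hcontφ u hu).circleIntegrable hρ0.le
    have hintv : CircleIntegrable (fun z : ℂ => z ^ (m - 1) * (1 - z)⁻¹ * g (v / z)) 0 ρ :=
      (hcontφ v hv).circleIntegrable hρ0.le
    have hRop : ∀ w : ℂ, Rop (fun z => (a * z + b) / (c * z + d)) ρ m h w
        = (2 * Real.pi * I : ℂ)⁻¹ * ∮ z in C(0, ρ), z ^ (m - 1) * (1 - z)⁻¹ * g (w / z) :=
      fun w => rfl
    rw [hRop u, hRop v, ← mul_sub,
      ← circleIntegral.integral_sub hintu hintv]
    rw [norm_mul]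
    have hnorm2πI : ‖(2 * Real.pi * I : ℂ)⁻¹‖ = (2 * Real.pi)⁻¹ := by
      rw [norm_inv, norm_mul, norm_mul, Complex.norm_I, mul_one]
      norm_num [Complex.norm_real, Real.norm_eq_abs, _root_.abs_of_nonneg Real.pi_nonneg]
    rw [hnorm2πI]
    have hO0 : 0 ≤ O := by
      have h0 := hosc 0 (mem_ball_self hρ0) 0 (mem_ball_self hρ0)
      simpa using h0
    set B : ℝ → ℝ :=
      fun θ => ρ ^ (m - 1) * O * (ρ / ‖(1:ℂ) - (ρ:ℂ) * Complex.exp (θ * I)‖) with hB_def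
    have hone : ∀ θ : ℝ, (1:ℂ) - (ρ:ℂ) * Complex.exp (θ * I) ≠ 0 := by
      intro θ hze
      have h1 : ‖(ρ:ℂ) * Complex.exp ((θ:ℂ) * I)‖ = ρ := by
        rw [norm_mul, Complex.norm_exp_ofReal_mul_I]
        simp [abs_of_pos hρ0]
      have h2 : (1:ℂ) = (ρ:ℂ) * Complex.exp ((θ:ℂ) * I) := by linear_combination hze
      rw [← h2, norm_one] at h1
      exact absurd h1.symm (ne_of_lt hρ1)
    have hBcont : Continuous B := by
      refine continuous_const.mul (continuous_const.div ?_ ?_)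
      · exact (continuous_const.sub (continuous_const.mul
          (Complex.continuous_exp.comp (Complex.continuous_ofReal.mul continuous_const)))).norm
      · intro θ
        simpa [norm_eq_zero, sub_eq_zero] using hone θ
    have hBint : IntervalIntegrable B MeasureTheory.volume 0 (2 * Real.pi) :=
      hBcont.intervalIntegrable _ _
    have hptwise : ∀ θ : ℝ,
        ‖deriv (circleMap 0 ρ) θ • (circleMap 0 ρ θ ^ (m - 1) *
            (1 - circleMap 0 ρ θ)⁻¹ * g (u / circleMap 0 ρ θ) -
          circleMap 0 ρ θ ^ (m - 1) * (1 - circleMap 0 ρ θ)⁻¹ *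
            g (v / circleMap 0 ρ θ))‖ ≤ B θ := by
      intro θ
      set z : ℂ := circleMap 0 ρ θ with hz_def
      have hznorm : ‖z‖ = ρ := by
        rw [hz_def]
        simp [norm_circleMap_zero, abs_of_pos hρ0]
      have hcm : z = (ρ:ℂ) * Complex.exp (θ * I) := by simp [hz_def, circleMap]
      have hΔ : ‖g (u / z) - g (v / z)‖ ≤ O := by
        have hmemu : u / z ∈ ball (0:ℂ) 1 := by
          rw [mem_ball, dist_zero_right, norm_div, hznorm, div_lt_one hρ0]; exact hu
        have hmemv : v / z ∈ ball (0:ℂ) 1 := by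
          rw [mem_ball, dist_zero_right, norm_div, hznorm, div_lt_one hρ0]; exact hv
        exact hosc _ (hmaps _ hmemu) _ (hmaps _ hmemv)
      have hfactor : z ^ (m - 1) * (1 - z)⁻¹ * g (u / z) -
          z ^ (m - 1) * (1 - z)⁻¹ * g (v / z)
          = z ^ (m - 1) * (1 - z)⁻¹ * (g (u / z) - g (v / z)) := by ring
      rw [hfactor, deriv_circleMap, norm_smul, norm_mul, Complex.norm_I, mul_one,
        norm_mul, norm_mul, norm_pow, norm_inv, hznorm]
      have h1z : (1:ℂ) - z = (1:ℂ) - (ρ:ℂ) * Complex.exp (θ * I) := by rw [hcm]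
      rw [h1z, hB_def]
      have hnn : (0:ℝ) < ‖(1:ℂ) - (ρ:ℂ) * Complex.exp (θ * I)‖ := by
        rcases (norm_nonneg ((1:ℂ) - (ρ:ℂ) * Complex.exp (θ * I))).lt_or_eq with h' | h'
        · exact h'
        · exact absurd (norm_eq_zero.mp h'.symm) (hone θ)
      rw [div_eq_mul_inv]
      calc ρ * (ρ ^ (m - 1) * ‖(1:ℂ) - (ρ:ℂ) * Complex.exp (θ * I)‖⁻¹ *
            ‖g (u / z) - g (v / z)‖)
          ≤ ρ * (ρ ^ (m - 1) * ‖(1:ℂ) - (ρ:ℂ) * Complex.exp (θ * I)‖⁻¹ * O) := by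
            refine mul_le_mul_of_nonneg_left (mul_le_mul_of_nonneg_left hΔ ?_) hρ0.le
            positivity
        _ = ρ ^ (m - 1) * O * (ρ * ‖(1:ℂ) - (ρ:ℂ) * Complex.exp (θ * I)‖⁻¹) := by ring
    have hcircle : ‖∮ z in C(0, ρ), (z ^ (m - 1) * (1 - z)⁻¹ * g (u / z) -
        z ^ (m - 1) * (1 - z)⁻¹ * g (v / z))‖
        ≤ ∫ θ in (0:ℝ)..(2 * Real.pi), B θ := by
      rw [circleIntegral]
      refine (intervalIntegral.norm_integral_le_abs_of_norm_le
        (Filter.Eventually.of_forall (fun θ => hptwise θ)) hBint).trans_eq ?_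
      refine abs_of_nonneg ?_
      refine intervalIntegral.integral_nonneg Real.two_pi_pos.le (fun θ _ => ?_)
      rw [hB_def]
      positivity
    have hBval : (∫ θ in (0:ℝ)..(2 * Real.pi), B θ)
        = ρ ^ (m - 1) * O * ∫ θ in (0:ℝ)..(2 * Real.pi),
            ρ / ‖(1:ℂ) - (ρ:ℂ) * Complex.exp (θ * I)‖ := by
      rw [hB_def, intervalIntegral.integral_const_mul]
    calc (2 * Real.pi)⁻¹ * ‖∮ z in C(0, ρ), (z ^ (m - 1) * (1 - z)⁻¹ * g (u / z) -
          z ^ (m - 1) * (1 - z)⁻¹ * g (v / z))‖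
        ≤ (2 * Real.pi)⁻¹ * (ρ ^ (m - 1) * O *
            ∫ θ in (0:ℝ)..(2 * Real.pi), ρ / ‖(1:ℂ) - (ρ:ℂ) * Complex.exp (θ * I)‖) := by
          refine mul_le_mul_of_nonneg_left (hcircle.trans_eq hBval) ?_
          positivity
      _ = ρ ^ (m - 1) * ((1 / (2 * Real.pi)) *
            ∫ θ in (0:ℝ)..(2 * Real.pi), ρ / ‖(1:ℂ) - (ρ:ℂ) * Complex.exp (θ * I)‖) * O := by
          ring
  -- part (c) for L
  · have h0 : ‖(0:ℂ)‖ < ρ := by simpa using hρ0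
    rw [hLop 0 h0, sub_self]
  -- part (c) for R
  · show (2 * Real.pi * I : ℂ)⁻¹ *
      (∮ z in C(0, ρ), z ^ (m - 1) * (1 - z)⁻¹ * g (0 / z)) = 0
    have hzero : (∮ z in C(0, ρ), z ^ (m - 1) * (1 - z)⁻¹ * g (0 / z)) = 0 := by
      simp only [zero_div]
      refine osc_cauchy_zero hρ0 hρ1 _ ?_
      refine DifferentiableOn.mul (DifferentiableOn.mul ?_ ?_) ?_
      · exact (differentiable_pow _).differentiableOn
      · refine DifferentiableOn.inv ?_ ?_
        · exact ((differentiable_const (1:ℂ)).sub differentiable_id).differentiableOn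
        · intro z hz hze
          rw [mem_ball, dist_zero_right] at hz
          have : z = 1 := by linear_combination -hze
          rw [this, norm_one] at hz
          exact lt_irrefl 1 hz
      · exact differentiableOn_const _
    rw [hzero, mul_zero]
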